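/- For n≥2, there is a unique group homomorphism π: B(B_{n+1}) → ℤ with π(σ_i) = 0 for all 1≤i≤n and π(t) = 1 (the exponent sum of t), and its kernel is exactly the subgroup of B(B_{n+1}) generated by σ_1,…,σ_n and a_{n+1} = φ_{n+1}σ_nφ_{n+1}^{-1}, where φ_{n+1} = tσ_1⋯σ_n. In other words, an element x of B(B_{n+1}) lies in the subgroup generated by σ_1,…,σ_n,a_{n+1} if and only if the sum of the exponents of t in any expression of x is zero. -/

import Mathlib

/-- Relators of the `B`-type braid group `B(B_{n+1})`: generator `some i` (`i : Fin n`)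
stands for `σ_{i+1}`, and `none` stands for `t`. -/
def braidRelsB (n : ℕ) : Set (FreeGroup (Option (Fin n))) :=
  { r | (∃ i j : Fin n, (i : ℕ) + 2 ≤ (j : ℕ) ∧
          r = FreeGroup.of (some i) * FreeGroup.of (some j) *
              (FreeGroup.of (some j) * FreeGroup.of (some i))⁻¹) ∨
        (∃ i j : Fin n, (j : ℕ) = (i : ℕ) + 1 ∧
          r = FreeGroup.of (some i) * FreeGroup.of (some j) * FreeGroup.of (some i) *
              (FreeGroup.of (some j) * FreeGroup.of (some i) * FreeGroup.of (some j))⁻¹) ∨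
        (∃ i : Fin n, 1 ≤ (i : ℕ) ∧
          r = FreeGroup.of (some i) * FreeGroup.of none *
              (FreeGroup.of none * FreeGroup.of (some i))⁻¹) ∨
        (∃ i : Fin n, (i : ℕ) = 0 ∧
          r = FreeGroup.of (some i) * FreeGroup.of none * FreeGroup.of (some i) *
              FreeGroup.of none *
              (FreeGroup.of none * FreeGroup.of (some i) * FreeGroup.of none *
                FreeGroup.of (some i))⁻¹) }

/-- The `B`-type braid group `B(B_{n+1})`, with generators `σ_1, …, σ_n` and `t`. -/
abbrev BraidB (n : ℕ) : Type := PresentedGroup (braidRelsB n)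

/-- `φ_{n+1} = t σ_1 σ_2 ⋯ σ_n` in `B(B_{n+1})`. -/
noncomputable def phiB (n : ℕ) : BraidB n :=
  PresentedGroup.of none *
    ((List.finRange n).map fun i => (PresentedGroup.of (some i) : BraidB n)).prod

/-- `a_{n+1} = φ_{n+1} σ_n φ_{n+1}⁻¹` in `B(B_{n+1})`. -/
noncomputable def aB (n : ℕ) (h : 0 < n) : BraidB n :=
  phiB n * PresentedGroup.of (some (⟨n - 1, by omega⟩ : Fin n)) * (phiB n)⁻¹

namespace StmtAux

/-- `t` as an element of `BraidB n`. -/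
noncomputable def tB (n : ℕ) : BraidB n := PresentedGroup.of none

/-- `σ_{k+1}` (ℕ-indexed), or `1` if out of range. -/
noncomputable def sB (n : ℕ) (k : ℕ) : BraidB n :=
  if h : k < n then PresentedGroup.of (some ⟨k, h⟩) else 1

/-- Product `σ_{k+1} σ_{k+2} ⋯ σ_{k+m}` (ℕ-indexed). -/
noncomputable def prB (n : ℕ) (k m : ℕ) : BraidB n :=
  ((List.range' k m).map (sB n)).prod

variable {n : ℕ}

lemma rel_one {r : FreeGroup (Option (Fin n))} (h : r ∈ braidRelsB n) :
    PresentedGroup.mk (braidRelsB n) r = 1 :=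
  (QuotientGroup.eq_one_iff r).mpr (Subgroup.subset_normalClosure h)

lemma sB_eq {k : ℕ} (h : k < n) : sB n k = PresentedGroup.of (some ⟨k, h⟩) := dif_pos h

lemma comm_ss {i j : ℕ} (h : i + 2 ≤ j) : Commute (sB n i) (sB n j) := by
  by_cases hj : j < n
  · have hi : i < n := by omega
    rw [sB_eq hi, sB_eq hj]
    have h1 := rel_one (n := n) (Or.inl ⟨⟨i, hi⟩, ⟨j, hj⟩, h, rfl⟩)
    rw [map_mul, map_mul, map_inv, map_mul, mul_inv_eq_one] at h1
    exact h1
  · have : sB n j = 1 := dif_neg hj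
    rw [this]; exact Commute.one_right _

lemma braid_ss {i : ℕ} (h : i + 1 < n) :
    sB n i * sB n (i + 1) * sB n i = sB n (i + 1) * sB n i * sB n (i + 1) := by
  have hi : i < n := by omega
  rw [sB_eq hi, sB_eq h]
  have h1 := rel_one (n := n) (Or.inr <| Or.inl ⟨⟨i, hi⟩, ⟨i + 1, h⟩, rfl, rfl⟩)
  rw [map_mul, map_mul, map_inv, map_mul, map_mul, mul_inv_eq_one] at h1
  exact h1

lemma comm_st {i : ℕ} (h : 1 ≤ i) : Commute (sB n i) (tB n) := by
  by_cases hi : i < n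
  · rw [sB_eq hi]
    have h1 := rel_one (n := n) (Or.inr <| Or.inr <| Or.inl ⟨⟨i, hi⟩, h, rfl⟩)
    rw [map_mul, map_inv, map_mul, mul_inv_eq_one] at h1
    exact h1
  · have : sB n i = 1 := dif_neg hi
    rw [this]; exact Commute.one_left _

lemma rel4 (h : 0 < n) :
    sB n 0 * tB n * sB n 0 * tB n = tB n * sB n 0 * tB n * sB n 0 := by
  rw [sB_eq h]
  have h1 := rel_one (n := n) (Or.inr <| Or.inr <| Or.inr ⟨⟨0, h⟩, rfl, rfl⟩)
  rw [map_mul, map_mul, map_mul, map_inv, map_mul, map_mul, map_mul, mul_inv_eq_one] at h1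
  exact h1

lemma prB_zero (k : ℕ) : prB n k 0 = 1 := rfl

lemma prB_succ (k m : ℕ) : prB n k (m + 1) = sB n k * prB n (k + 1) m := by
  rw [prB, show List.range' k (m + 1) = k :: List.range' (k + 1) m from rfl,
    List.map_cons, List.prod_cons]; rfl

lemma comm_s_pr {i k : ℕ} (h : i + 2 ≤ k) (m : ℕ) : Commute (sB n i) (prB n k m) := by
  induction m generalizing k with
  | zero => rw [prB_zero]; exact Commute.one_right _
  | succ m ih =>
      rw [prB_succ]
      exact (comm_ss h).mul_right (ih (by omega))

lemma comm_t_pr {k : ℕ} (h : 1 ≤ k) (m : ℕ) : Commute (tB n) (prB n k m) := by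
  induction m generalizing k with
  | zero => rw [prB_zero]; exact Commute.one_right _
  | succ m ih =>
      rw [prB_succ]
      exact ((comm_st h).symm).mul_right (ih (by omega))

lemma key (m : ℕ) : ∀ k, k + m < n →
    prB n k (m + 1) * sB n (k + m) * (prB n k (m + 1))⁻¹ =
      (prB n (k + 1) m)⁻¹ * sB n k * prB n (k + 1) m := by
  induction m with
  | zero =>
      intro k _
      rw [prB_succ, prB_zero]
      group
  | succ m ih =>
      intro k hk
      have h1 : (k + 1) + m < n := by omega
      have ihh := ih (k + 1) h1
      have e2 : sB n k * sB n (k + 1) * (sB n k)⁻¹ =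
          (sB n (k + 1))⁻¹ * sB n k * sB n (k + 1) := by
        have hb := braid_ss (show k + 1 < n by omega)
        apply mul_left_cancel (a := sB n (k + 1))
        rw [show sB n (k + 1) * (sB n k * sB n (k + 1) * (sB n k)⁻¹) =
            (sB n (k + 1) * sB n k * sB n (k + 1)) * (sB n k)⁻¹ by group, ← hb]
        group
      have c := comm_s_pr (n := n) (show k + 2 ≤ k + 2 by omega) m
      calc prB n k (m + 1 + 1) * sB n (k + (m + 1)) * (prB n k (m + 1 + 1))⁻¹
          = sB n k * (prB n (k + 1) (m + 1) * sB n ((k + 1) + m) *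
              (prB n (k + 1) (m + 1))⁻¹) * (sB n k)⁻¹ := by
            rw [prB_succ k (m + 1), show k + (m + 1) = (k + 1) + m by omega]
            group
        _ = sB n k * ((prB n (k + 2) m)⁻¹ * sB n (k + 1) * prB n (k + 2) m) *
              (sB n k)⁻¹ := by rw [ihh]
        _ = (sB n k * (prB n (k + 2) m)⁻¹) * sB n (k + 1) *
              (prB n (k + 2) m * (sB n k)⁻¹) := by group
        _ = ((prB n (k + 2) m)⁻¹ * sB n k) * sB n (k + 1) *
              ((sB n k)⁻¹ * prB n (k + 2) m) := by
            rw [c.inv_right.eq, ← c.inv_left.eq]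
        _ = (prB n (k + 2) m)⁻¹ * (sB n k * sB n (k + 1) * (sB n k)⁻¹) *
              prB n (k + 2) m := by group
        _ = (prB n (k + 2) m)⁻¹ * ((sB n (k + 1))⁻¹ * sB n k * sB n (k + 1)) *
              prB n (k + 2) m := by rw [e2]
        _ = (prB n (k + 1) (m + 1))⁻¹ * sB n k * prB n (k + 1) (m + 1) := by
            rw [prB_succ (k + 1) m]; group

lemma phiB_eq : phiB n = tB n * prB n 0 n := by
  rw [phiB, tB, prB]
  congr 1
  rw [← List.range_eq_range' (n := n), ← (show (List.finRange n).map (fun i : Fin n => (i : ℕ)) = List.range n from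
    List.ext_getElem (by simp) (by simp)), List.map_map]
  refine congrArg List.prod (List.map_congr_left ?_)
  intro i _
  simp [Function.comp, sB_eq i.isLt]

lemma aB_eq (hn : 0 < n) :
    aB n hn = (prB n 1 (n - 1))⁻¹ * (tB n * sB n 0 * (tB n)⁻¹) * prB n 1 (n - 1) := by
  have hkey := key (n := n) (n - 1) 0 (by omega)
  simp only [Nat.zero_add] at hkey
  rw [show (n - 1 : ℕ) + 1 = n from by omega] at hkey
  have c := comm_t_pr (n := n) (le_refl 1) (n - 1)
  have hs : PresentedGroup.of (some (⟨n - 1, by omega⟩ : Fin n)) = sB n (n - 1) :=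
    (sB_eq (by omega)).symm
  rw [aB, hs, phiB_eq]
  calc tB n * prB n 0 n * sB n (n - 1) * (tB n * prB n 0 n)⁻¹
      = tB n * (prB n 0 n * sB n (n - 1) * (prB n 0 n)⁻¹) * (tB n)⁻¹ := by group
    _ = tB n * ((prB n 1 (n - 1))⁻¹ * sB n 0 * prB n 1 (n - 1)) * (tB n)⁻¹ := by rw [hkey]
    _ = (tB n * (prB n 1 (n - 1))⁻¹) * sB n 0 * (prB n 1 (n - 1) * (tB n)⁻¹) := by group
    _ = ((prB n 1 (n - 1))⁻¹ * tB n) * sB n 0 * ((tB n)⁻¹ * prB n 1 (n - 1)) := by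
        rw [c.inv_right.eq, ← c.inv_left.eq]
    _ = (prB n 1 (n - 1))⁻¹ * (tB n * sB n 0 * (tB n)⁻¹) * prB n 1 (n - 1) := by group

/-- `t⁻¹ σ₁ t = σ₁ (t σ₁ t⁻¹) σ₁⁻¹`. -/
lemma conj_down (h : 0 < n) :
    (tB n)⁻¹ * sB n 0 * tB n = sB n 0 * (tB n * sB n 0 * (tB n)⁻¹) * (sB n 0)⁻¹ := by
  have key := rel4 h
  set s := sB n 0
  set t := tB n
  have h2 : t * (s * (t * s * t⁻¹) * s⁻¹) * t = t * s * t * s * (t⁻¹ * s⁻¹ * t) := by group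
  rw [← key] at h2
  have h3 : s * t * s * t * (t⁻¹ * s⁻¹ * t) = t * (t⁻¹ * s * t) * t := by group
  exact (mul_left_cancel (mul_right_cancel (h2.trans h3))).symm

/-- `t (t σ₁ t⁻¹) t⁻¹ = (t σ₁ t⁻¹)⁻¹ σ₁ (t σ₁ t⁻¹)`. -/
lemma conj_up (h : 0 < n) :
    tB n * (tB n * sB n 0 * (tB n)⁻¹) * (tB n)⁻¹ =
      (tB n * sB n 0 * (tB n)⁻¹)⁻¹ * sB n 0 * (tB n * sB n 0 * (tB n)⁻¹) := by
  have key := rel4 h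
  set s := sB n 0
  set t := tB n
  have h2 : (t * s * t⁻¹) * (t * (t * s * t⁻¹) * t⁻¹) = t * s * t * s * (t⁻¹ * t⁻¹) := by
    group
  rw [← key] at h2
  have h3 : s * t * s * t * (t⁻¹ * t⁻¹) =
      (t * s * t⁻¹) * ((t * s * t⁻¹)⁻¹ * s * (t * s * t⁻¹)) := by group
  exact mul_left_cancel (h2.trans h3)

/-- conjugation through a commuting element -/
lemma conj_comm_aux {G : Type*} [Group G] {x y : G} (c : Commute x y) (h : G) :
    x * (y⁻¹ * h * y) * x⁻¹ = y⁻¹ * (x * h * x⁻¹) * y := by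
  calc x * (y⁻¹ * h * y) * x⁻¹ = (x * y⁻¹) * h * (y * x⁻¹) := by group
    _ = (y⁻¹ * x) * h * (x⁻¹ * y) := by rw [c.inv_right.eq, ← c.inv_left.eq]
    _ = y⁻¹ * (x * h * x⁻¹) * y := by group

end StmtAux

open StmtAux

theorem stmt_2 (n : ℕ) (hn : 2 ≤ n) :
    ∃ π : BraidB n →* Multiplicative ℤ,
      ((∀ i : Fin n, π (PresentedGroup.of (some i)) = 1) ∧
        π (PresentedGroup.of none) = Multiplicative.ofAdd 1) ∧
      (∀ π' : BraidB n →* Multiplicative ℤ,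
        ((∀ i : Fin n, π' (PresentedGroup.of (some i)) = 1) ∧
          π' (PresentedGroup.of none) = Multiplicative.ofAdd 1) → π' = π) ∧
      π.ker = Subgroup.closure
        ({ x : BraidB n | ∃ i : Fin n, x = PresentedGroup.of (some i) } ∪
          { aB n (by omega) }) := by
  classical
  have hn0 : 0 < n := by omega
  -- the exponent-sum homomorphism
  set f : Option (Fin n) → Multiplicative ℤ :=
    fun z => z.elim (Multiplicative.ofAdd 1) (fun _ => 1) with hf_def
  have hf : ∀ r ∈ braidRelsB n, FreeGroup.lift f r = 1 := by
    rintro r (⟨i, j, -, rfl⟩ | ⟨i, j, -, rfl⟩ | ⟨i, -, rfl⟩ | ⟨i, -, rfl⟩) <;>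
      (simp [hf_def]; try group)
  set π : BraidB n →* Multiplicative ℤ := PresentedGroup.toGroup hf with hπ_def
  have hπs : ∀ i : Fin n, π (PresentedGroup.of (some i)) = 1 := fun i => by
    simp [hπ_def, hf_def]
  have hπt : π (PresentedGroup.of none) = Multiplicative.ofAdd 1 := by
    simp [hπ_def, hf_def]
  -- The generating set and subgroup
  set S : Set (BraidB n) :=
    { x : BraidB n | ∃ i : Fin n, x = PresentedGroup.of (some i) } ∪
      { aB n hn0 } with hS_def
  set H : Subgroup (BraidB n) := Subgroup.closure S with hH_def
  refine ⟨π, ⟨hπs, hπt⟩, ?_, ?_⟩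
  · intro π' ⟨h1, h2⟩
    ext z
    cases z with
    | none => rw [h2, hπt]
    | some i => rw [h1, hπs]
  -- Now the kernel statement
  -- basic memberships
  have hσH : ∀ i : Fin n, PresentedGroup.of (some i) ∈ H :=
    fun i => Subgroup.subset_closure (Or.inl ⟨i, rfl⟩)
  have hsH : ∀ k : ℕ, sB n k ∈ H := by
    intro k
    by_cases h : k < n
    · rw [sB_eq h]; exact hσH _
    · rw [sB, dif_neg h]; exact one_mem H
  have hprH : ∀ k m : ℕ, prB n k m ∈ H := by
    intro k m
    refine Subgroup.list_prod_mem _ ?_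
    intro x hx
    rcases List.mem_map.1 hx with ⟨j, -, rfl⟩
    exact hsH j
  have haH : aB n hn0 ∈ H := Subgroup.subset_closure (Or.inr rfl)
  have hab : aB n hn0 =
      (prB n 1 (n - 1))⁻¹ * (tB n * sB n 0 * (tB n)⁻¹) * prB n 1 (n - 1) := aB_eq hn0
  have hbH : tB n * sB n 0 * (tB n)⁻¹ ∈ H := by
    have e : tB n * sB n 0 * (tB n)⁻¹ =
        prB n 1 (n - 1) * aB n hn0 * (prB n 1 (n - 1))⁻¹ := by rw [hab]; group
    rw [e]
    exact mul_mem (mul_mem (hprH 1 (n - 1)) haH) (inv_mem (hprH 1 (n - 1)))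
  -- H ≤ ker π
  have hπφ : π (phiB n) = Multiplicative.ofAdd 1 := by
    rw [phiB, map_mul, hπt, map_list_prod, List.map_map]
    rw [List.prod_eq_one (fun x hx => by
        rcases List.mem_map.1 hx with ⟨j, -, rfl⟩
        simpa using hπs j), mul_one]
  have hHker : H ≤ π.ker := by
    rw [hH_def]
    apply (Subgroup.closure_le _).2
    rintro g (⟨i, rfl⟩ | rfl)
    · exact hπs i
    · show π (aB n hn0) = 1
      rw [aB, map_mul, map_mul, map_inv, hπφ, hπs]
      group
  -- conjugation stability of H
  have hstep : ∀ x : BraidB n, (∀ g ∈ S, x * g * x⁻¹ ∈ H) →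
      ∀ h ∈ H, x * h * x⁻¹ ∈ H := by
    intro x hx h hh
    have hle : H ≤ Subgroup.comap ((MulAut.conj x).toMonoidHom) H := by
      rw [hH_def]
      apply (Subgroup.closure_le _).2
      intro g hg
      simpa using hx g hg
    simpa using hle hh
  have hconjS : ∀ z : Option (Fin n), ∀ g ∈ S,
      (PresentedGroup.of z * g * (PresentedGroup.of z)⁻¹ ∈ H ∧
       (PresentedGroup.of z)⁻¹ * g * PresentedGroup.of z ∈ H) := by
    intro z g hg
    cases z with
    | some j =>
        constructor
        · exact mul_mem (mul_mem (hσH j) (Subgroup.subset_closure hg)) (inv_mem (hσH j))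
        · exact mul_mem (mul_mem (inv_mem (hσH j)) (Subgroup.subset_closure hg)) (hσH j)
    | none =>
        have ht : (PresentedGroup.of none : BraidB n) = tB n := rfl
        rcases hg with ⟨i, rfl⟩ | rfl
        · -- g = σ_i
          by_cases hi : (i : ℕ) = 0
          · have hi0 : PresentedGroup.of (some i) = sB n 0 := by
              rw [sB_eq hn0]
              congr 1
              exact congrArg some (Fin.ext hi)
            rw [ht, hi0]
            constructor
            · exact hbH
            · rw [conj_down hn0]
              exact mul_mem (mul_mem (hsH 0) hbH) (inv_mem (hsH 0))
          · have hi1 : PresentedGroup.of (some i) = sB n i := by rw [sB_eq i.isLt]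
            have c := comm_st (n := n) (i := (i : ℕ)) (by omega)
            rw [ht, hi1]
            constructor
            · rw [show tB n * sB n i * (tB n)⁻¹ = sB n i by rw [← c.eq]; group]
              exact hsH i
            · rw [show (tB n)⁻¹ * sB n i * tB n = sB n i by
                rw [mul_assoc, c.eq]; group]
              exact hsH i
        · -- g = a
          have c := comm_t_pr (n := n) (le_refl 1) (n - 1)
          rw [ht, hab]
          constructor
          · rw [conj_comm_aux c (tB n * sB n 0 * (tB n)⁻¹), conj_up hn0]
            exact mul_mem (mul_mem (inv_mem (hprH 1 (n - 1)))
              (mul_mem (mul_mem (inv_mem hbH) (hsH 0)) hbH)) (hprH 1 (n - 1))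
          · have e := conj_comm_aux c.inv_left (tB n * sB n 0 * (tB n)⁻¹)
            rw [inv_inv] at e
            rw [e, show (tB n)⁻¹ * (tB n * sB n 0 * (tB n)⁻¹) * tB n = sB n 0 by group]
            exact mul_mem (mul_mem (inv_mem (hprH 1 (n - 1))) (hsH 0)) (hprH 1 (n - 1))
  have hconj : ∀ x : BraidB n, ∀ h ∈ H, x * h * x⁻¹ ∈ H := by
    have hK : ∀ x : BraidB n,
        (∀ h ∈ H, x * h * x⁻¹ ∈ H ∧ x⁻¹ * h * x ∈ H) := by
      set K : Subgroup (BraidB n) :=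
        { carrier := { x | ∀ h ∈ H, x * h * x⁻¹ ∈ H ∧ x⁻¹ * h * x ∈ H }
          one_mem' := by
            intro h hh
            constructor
            · rw [show (1 : BraidB n) * h * (1 : BraidB n)⁻¹ = h by group]; exact hh
            · rw [show (1 : BraidB n)⁻¹ * h * (1 : BraidB n) = h by group]; exact hh
          mul_mem' := by
            intro p q hp hq h hh
            constructor
            · rw [show p * q * h * (p * q)⁻¹ = p * (q * h * q⁻¹) * p⁻¹ by group]
              exact (hp _ ((hq h hh).1)).1
            · rw [show (p * q)⁻¹ * h * (p * q) = q⁻¹ * (p⁻¹ * h * p) * q by group]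
              exact (hq _ ((hp h hh).2)).2
          inv_mem' := by
            intro p hp h hh
            constructor
            · rw [show p⁻¹ * h * (p⁻¹)⁻¹ = p⁻¹ * h * p by group]
              exact (hp h hh).2
            · rw [show (p⁻¹)⁻¹ * h * p⁻¹ = p * h * p⁻¹ by group]
              exact (hp h hh).1 } with hK_def
      intro x
      refine PresentedGroup.generated_by _ K ?_ x
      intro z
      show ∀ h ∈ H, _
      intro h hh
      refine ⟨hstep _ (fun g hg => (hconjS z g hg).1) h hh, ?_⟩
      have := hstep ((PresentedGroup.of z)⁻¹) (fun g hg => by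
        simpa using (hconjS z g hg).2) h hh
      simpa using this
    exact fun x h hh => (hK x h hh).1
  -- every element is t^k · (element of H)
  have hJ : ∀ x : BraidB n, ∃ k : ℤ, x * tB n ^ k ∈ H := by
    set J : Subgroup (BraidB n) :=
      { carrier := { x | ∃ k : ℤ, x * tB n ^ k ∈ H }
        one_mem' := ⟨0, by simpa using one_mem H⟩
        mul_mem' := by
          rintro p q ⟨k, hk⟩ ⟨l, hl⟩
          refine ⟨l + k, ?_⟩
          have h1 := hconj ((tB n ^ k)⁻¹) _ hl
          have h2 := mul_mem hk h1
          rw [show p * tB n ^ k * ((tB n ^ k)⁻¹ * (q * tB n ^ l) * ((tB n ^ k)⁻¹)⁻¹) =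
              p * q * (tB n ^ l * tB n ^ k) by group, ← zpow_add] at h2
          exact h2
        inv_mem' := by
          rintro p ⟨k, hk⟩
          refine ⟨-k, ?_⟩
          have h1 := hconj (tB n ^ k) _ (inv_mem hk)
          rw [show tB n ^ k * (p * tB n ^ k)⁻¹ * (tB n ^ k)⁻¹ =
              p⁻¹ * (tB n ^ k)⁻¹ by group, ← zpow_neg] at h1
          exact h1 } with hJ_def
    intro x
    refine PresentedGroup.generated_by _ J ?_ x
    intro z
    cases z with
    | some i => exact ⟨0, by simpa using hσH i⟩
    | none =>
        refine ⟨-1, ?_⟩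
        have : (PresentedGroup.of none : BraidB n) * tB n ^ (-1 : ℤ) = 1 := by
          rw [show (PresentedGroup.of none : BraidB n) = tB n from rfl]
          group
        rw [this]
        exact one_mem H
  -- conclude
  apply le_antisymm
  · intro x hx
    obtain ⟨k, hk⟩ := hJ x
    have h1 : π (x * tB n ^ k) = 1 := hHker hk
    rw [map_mul, map_zpow, hx, one_mul,
      show π (tB n) = Multiplicative.ofAdd 1 from hπt] at h1
    have hk0 : k = 0 := by
      have := congrArg Multiplicative.toAdd h1
      simpa using this
    rw [hk0] at hk
    simpa using hk
  · exact hHker
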